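/- arXiv:2503.09234 — 3 statements merged into one kernel-verified Lean document; each statement's English description precedes it below -/
import Mathlib

section
/- Let n ≥ 5 be an integer, let Ω ⊆ ℝⁿ \ {0} be an open set, let Ω* = {x/|x|² : x ∈ Ω} be its image under inversion, and let u be a C⁴ function on Ω*. Define the Kelvin transform K(u)(x) = |x|^{4−n} u(x/|x|²) for x ∈ Ω. Then for every x ∈ Ω, Δ²(K(u))(x) = |x|^{−n−4} (Δ²u)(x/|x|²); equivalently, Δ²(K(u))(x) = |x|^{−8} K(Δ²u)(x). -/
open scoped BigOperators

/-- The Euclidean Laplacian on `ℝⁿ`: the sum of the second partial derivatives. -/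
noncomputable def Lap {n : ℕ} (u : EuclideanSpace ℝ (Fin n) → ℝ) :
    EuclideanSpace ℝ (Fin n) → ℝ := fun x =>
  ∑ i : Fin n,
    fderiv ℝ (fun y => fderiv ℝ u y (EuclideanSpace.single i 1)) x (EuclideanSpace.single i 1)

/-- The bilaplacian `Δ² = Δ ∘ Δ`. -/
noncomputable def BiLap {n : ℕ} (u : EuclideanSpace ℝ (Fin n) → ℝ) :
    EuclideanSpace ℝ (Fin n) → ℝ := Lap (Lap u)

/-- The Kelvin transform `K(f)(y) = |y|^{4−n} f(y/|y|²)`. -/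
noncomputable def Kelvin {n : ℕ} (f : EuclideanSpace ℝ (Fin n) → ℝ) :
    EuclideanSpace ℝ (Fin n) → ℝ :=
  fun y => ‖y‖ ^ ((4 : ℝ) - n) * f ((‖y‖ ^ 2)⁻¹ • y)


open scoped RealInnerProductSpace

noncomputable section KelvinAux

variable {n : ℕ}

/-- standard basis vector -/
def ee (n : ℕ) (i : Fin n) : EuclideanSpace ℝ (Fin n) := EuclideanSpace.single i 1

/-- partial derivative in direction `i` -/
def pd (i : Fin n) (f : EuclideanSpace ℝ (Fin n) → ℝ) : EuclideanSpace ℝ (Fin n) → ℝ :=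
  fun x => fderiv ℝ f x (ee n i)

/-- squared norm -/
def qq (x : EuclideanSpace ℝ (Fin n)) : ℝ := ‖x‖ ^ 2

/-- inversion -/
def iv (x : EuclideanSpace ℝ (Fin n)) : EuclideanSpace ℝ (Fin n) := (qq x)⁻¹ • x

/-- radial power -/
def rp (c : ℝ) (x : EuclideanSpace ℝ (Fin n)) : ℝ := (qq x) ^ c

lemma qq_pos {x : EuclideanSpace ℝ (Fin n)} (hx : x ≠ 0) : 0 < qq x := by
  simpa [qq] using pow_pos (norm_pos_iff.2 hx) 2

lemma qq_ne {x : EuclideanSpace ℝ (Fin n)} (hx : x ≠ 0) : qq x ≠ 0 := (qq_pos hx).ne'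

lemma iv_ne_zero {x : EuclideanSpace ℝ (Fin n)} (hx : x ≠ 0) : iv x ≠ 0 := by
  simp [iv, smul_ne_zero_iff, hx, inv_ne_zero (qq_ne hx)]

lemma qq_iv {x : EuclideanSpace ℝ (Fin n)} (hx : x ≠ 0) : qq (iv x) = (qq x)⁻¹ := by
  have h : ‖iv x‖ = ‖x‖⁻¹ := by
    rw [iv, norm_smul]
    rw [qq]
    rw [norm_inv, norm_pow, norm_norm]
    field_simp [norm_ne_zero_iff.2 hx]
  simp [qq, h, pow_two]

lemma iv_iv {x : EuclideanSpace ℝ (Fin n)} (hx : x ≠ 0) : iv (iv x) = x := by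
  rw [iv, qq_iv hx, iv, smul_smul, inv_inv]
  rw [mul_inv_cancel₀ (qq_ne hx), one_smul]

lemma contDiff_qq : ContDiff ℝ (⊤ : ℕ∞) (qq (n := n)) := contDiff_norm_sq ℝ

lemma hasFDerivAt_qq (x : EuclideanSpace ℝ (Fin n)) :
    HasFDerivAt qq ((2 : ℝ) • innerSL ℝ x) x := by
  have := (hasStrictFDerivAt_norm_sq x).hasFDerivAt
  refine this.congr_fderiv ?_
  ext v
  simp [two_smul]


lemma hasFDerivAt_rp {x : EuclideanSpace ℝ (Fin n)} (hx : x ≠ 0) (c : ℝ) :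
    HasFDerivAt (rp (n := n) c) ((2 * c * rp (c-1) x) • innerSL ℝ x) x := by
  have h2 := (Real.hasDerivAt_rpow_const (x := qq x) (p := c) (Or.inl (qq_ne hx)))
  have := h2.comp_hasFDerivAt x (hasFDerivAt_qq x)
  refine this.congr_fderiv ?_
  ext v; simp [rp]; ring

/-- the derivative of the inversion map -/
def Sm (x : EuclideanSpace ℝ (Fin n)) : EuclideanSpace ℝ (Fin n) →L[ℝ] EuclideanSpace ℝ (Fin n) :=
  (qq x)⁻¹ • ContinuousLinearMap.id ℝ _ -
    ((2 * ((qq x)⁻¹)^2) • innerSL ℝ x).smulRight x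

lemma Sm_apply (x v : EuclideanSpace ℝ (Fin n)) :
    Sm x v = (qq x)⁻¹ • v - (2 * ((qq x)⁻¹)^2 * ⟪x, v⟫) • x := by
  simp [Sm, smul_smul]

lemma hasFDerivAt_iv {x : EuclideanSpace ℝ (Fin n)} (hx : x ≠ 0) :
    HasFDerivAt iv (Sm x) x := by
  have hq : HasFDerivAt (fun y : EuclideanSpace ℝ (Fin n) => (qq y)⁻¹)
      ((-((qq x)^2)⁻¹ : ℝ) • ((2:ℝ) • innerSL ℝ x)) x :=
    (hasDerivAt_inv (qq_ne hx)).comp_hasFDerivAt x (hasFDerivAt_qq x)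
  have := hq.smul (hasFDerivAt_id x)
  refine this.congr_fderiv ?_
  ext v
  simp [Sm_apply, iv]
  ring

lemma Sm_self {x : EuclideanSpace ℝ (Fin n)} (hx : x ≠ 0) :
    Sm x x = -((qq x)⁻¹ • x) := by
  rw [Sm_apply, real_inner_self_eq_norm_sq]
  rw [show (‖x‖^2 : ℝ) = qq x from rfl]
  rw [← sub_smul, ← neg_smul]
  congr 1
  have h := qq_ne hx
  field_simp
  ring

lemma clm_Sm (L : EuclideanSpace ℝ (Fin n) →L[ℝ] ℝ) (x v : EuclideanSpace ℝ (Fin n)) :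
    L (Sm x v) = (qq x)⁻¹ * L v - 2 * ((qq x)⁻¹)^2 * ⟪x, v⟫ * L x := by
  rw [Sm_apply, map_sub, map_smul, map_smul]
  simp [smul_eq_mul]

lemma inner_ee (x : EuclideanSpace ℝ (Fin n)) (i : Fin n) : ⟪x, ee n i⟫ = x i := by
  rw [ee, EuclideanSpace.inner_single_right]; simp

lemma clm_decomp (x : EuclideanSpace ℝ (Fin n)) (L : EuclideanSpace ℝ (Fin n) →L[ℝ] ℝ) :
    L x = ∑ i, x i * L (ee n i) := by
  have hproj : ∀ (j : Fin n) (z : EuclideanSpace ℝ (Fin n)),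
      z j = PiLp.proj (𝕜 := ℝ) 2 (fun _ : Fin n => ℝ) j z := fun _ _ => rfl
  have hx : x = ∑ i, x i • (ee n i) := by
    ext j
    rw [hproj j x, hproj j (∑ i : Fin n, x i • ee n i), map_sum]
    simp [ee, EuclideanSpace.single_apply, PiLp.proj_apply]
  conv_lhs => rw [hx]
  rw [map_sum]
  congr 1; ext i; rw [L.map_smul]; simp

lemma sum_sq_eq_qq (x : EuclideanSpace ℝ (Fin n)) : ∑ i, x i * x i = qq x := by
  have := clm_decomp x (innerSL ℝ x)
  simp only [innerSL_apply_apply, inner_ee] at this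
  rw [real_inner_self_eq_norm_sq] at this
  rw [← this]
  rfl

lemma hasFDerivAt_coord (x : EuclideanSpace ℝ (Fin n)) (i : Fin n) :
    HasFDerivAt (fun y : EuclideanSpace ℝ (Fin n) => y i)
      (PiLp.proj (𝕜 := ℝ) 2 (fun _ : Fin n => ℝ) i) x :=
  (PiLp.proj (𝕜 := ℝ) 2 (fun _ : Fin n => ℝ) i).hasFDerivAt

lemma proj_ee (i j : Fin n) :
    PiLp.proj (𝕜 := ℝ) 2 (fun _ : Fin n => ℝ) i (ee n j) = if j = i then 1 else 0 := by
  simp [PiLp.proj_apply, ee, EuclideanSpace.single_apply, eq_comm]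

/- ### pd machinery -/

lemma pd_of_hasFDerivAt {f : EuclideanSpace ℝ (Fin n) → ℝ} {L : EuclideanSpace ℝ (Fin n) →L[ℝ] ℝ} {x : EuclideanSpace ℝ (Fin n)} (i : Fin n)
    (h : HasFDerivAt f L x) : pd i f x = L (ee n i) := by
  rw [pd]; rw [h.fderiv]

lemma lap_eq_pd (f : EuclideanSpace ℝ (Fin n) → ℝ) (x : EuclideanSpace ℝ (Fin n)) :
    Lap f x = ∑ i, pd i (pd i f) x := rfl

lemma pd_congr_nhds {f g : EuclideanSpace ℝ (Fin n) → ℝ} {x : EuclideanSpace ℝ (Fin n)} (i : Fin n)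
    (h : f =ᶠ[nhds x] g) : pd i f x = pd i g x := by
  rw [pd, pd, h.fderiv_eq]

lemma lap_congr_nhds {f g : EuclideanSpace ℝ (Fin n) → ℝ} {x : EuclideanSpace ℝ (Fin n)} (h : f =ᶠ[nhds x] g) :
    Lap f x = Lap g x := by
  rw [lap_eq_pd, lap_eq_pd]
  refine Finset.sum_congr rfl fun i _ => ?_
  refine pd_congr_nhds i ?_
  filter_upwards [h.fderiv (𝕜 := ℝ)] with y hy
  rw [pd, pd, hy]


/- ### smoothness of pd -/

lemma diffAt_of_contDiffOn {F : Type*} [NormedAddCommGroup F] [NormedSpace ℝ F]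
    {f : EuclideanSpace ℝ (Fin n) → F} {U : Set (EuclideanSpace ℝ (Fin n))}
    {m : ℕ} (hU : IsOpen U) (hf : ContDiffOn ℝ m f U) (hm : 1 ≤ m)
    {x : EuclideanSpace ℝ (Fin n)} (hx : x ∈ U) : DifferentiableAt ℝ f x :=
  (hf.contDiffAt (hU.mem_nhds hx)).differentiableAt (by exact_mod_cast (Nat.one_le_iff_ne_zero.mp hm))

lemma contDiffOn_pd {f : EuclideanSpace ℝ (Fin n) → ℝ} {U : Set (EuclideanSpace ℝ (Fin n))}
    {m k : ℕ} (hU : IsOpen U) (hf : ContDiffOn ℝ m f U) (h : k + 1 ≤ m) (i : Fin n) :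
    ContDiffOn ℝ k (pd i f) U := by
  have h2 : ContDiffOn ℝ k (fderiv ℝ f) U := by
    apply hf.fderiv_of_isOpen hU
    exact_mod_cast h
  exact h2.clm_apply contDiffOn_const

lemma pd_pd_eq {f : EuclideanSpace ℝ (Fin n) → ℝ} {U : Set (EuclideanSpace ℝ (Fin n))}
    (hU : IsOpen U) (hf : ContDiffOn ℝ 2 f U) {x : EuclideanSpace ℝ (Fin n)} (hx : x ∈ U)
    (i j : Fin n) :
    pd i (pd j f) x = fderiv ℝ (fderiv ℝ f) x (ee n i) (ee n j) := by
  have hdf : DifferentiableAt ℝ (fderiv ℝ f) x := by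
    have h2 : ContDiffOn ℝ 1 (fderiv ℝ f) U := hf.fderiv_of_isOpen hU (by norm_num)
    exact diffAt_of_contDiffOn hU h2 le_rfl hx
  have : pd i (pd j f) x
      = fderiv ℝ (fun y => (fderiv ℝ f y) (ee n j)) x (ee n i) := rfl
  rw [this, fderiv_clm_apply hdf (differentiableAt_const _)]
  simp

lemma pd_comm {f : EuclideanSpace ℝ (Fin n) → ℝ} {U : Set (EuclideanSpace ℝ (Fin n))}
    (hU : IsOpen U) (hf : ContDiffOn ℝ 2 f U) {x : EuclideanSpace ℝ (Fin n)} (hx : x ∈ U)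
    (i j : Fin n) : pd i (pd j f) x = pd j (pd i f) x := by
  rw [pd_pd_eq hU hf hx i j, pd_pd_eq hU hf hx j i]
  exact (hf.contDiffAt (hU.mem_nhds hx)).isSymmSndFDerivAt (by norm_num) _ _

/- ### linearity of pd and Lap -/

lemma pd_add {f g : EuclideanSpace ℝ (Fin n) → ℝ} {x : EuclideanSpace ℝ (Fin n)}
    (hf : DifferentiableAt ℝ f x) (hg : DifferentiableAt ℝ g x) (i : Fin n) :
    pd i (fun y => f y + g y) x = pd i f x + pd i g x := by
  have := (hf.hasFDerivAt.fun_add hg.hasFDerivAt)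
  rw [pd_of_hasFDerivAt i this, pd, pd]
  simp [hf.hasFDerivAt.fderiv, hg.hasFDerivAt.fderiv]

lemma pd_const_mul {f : EuclideanSpace ℝ (Fin n) → ℝ} {x : EuclideanSpace ℝ (Fin n)}
    (hf : DifferentiableAt ℝ f x) (c : ℝ) (i : Fin n) :
    pd i (fun y => c * f y) x = c * pd i f x := by
  have := hf.hasFDerivAt.const_mul c
  rw [pd_of_hasFDerivAt i this, pd]
  simp

lemma lap_add {f g : EuclideanSpace ℝ (Fin n) → ℝ} {U : Set (EuclideanSpace ℝ (Fin n))}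
    (hU : IsOpen U) (hf : ContDiffOn ℝ 2 f U) (hg : ContDiffOn ℝ 2 g U)
    {x : EuclideanSpace ℝ (Fin n)} (hx : x ∈ U) :
    Lap (fun y => f y + g y) x = Lap f x + Lap g x := by
  rw [lap_eq_pd, lap_eq_pd, lap_eq_pd, ← Finset.sum_add_distrib]
  refine Finset.sum_congr rfl fun i _ => ?_
  have hstep : pd i (fun y => f y + g y) =ᶠ[nhds x] fun y => pd i f y + pd i g y := by
    filter_upwards [hU.mem_nhds hx] with y hy
    exact pd_add (diffAt_of_contDiffOn hU hf (by norm_num) hy)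
      (diffAt_of_contDiffOn hU hg (by norm_num) hy) i
  rw [pd_congr_nhds i hstep]
  exact pd_add (diffAt_of_contDiffOn hU (contDiffOn_pd hU hf le_rfl i) le_rfl hx)
    (diffAt_of_contDiffOn hU (contDiffOn_pd hU hg le_rfl i) le_rfl hx) i

lemma lap_const_mul {f : EuclideanSpace ℝ (Fin n) → ℝ} {U : Set (EuclideanSpace ℝ (Fin n))}
    (hU : IsOpen U) (hf : ContDiffOn ℝ 2 f U) (c : ℝ)
    {x : EuclideanSpace ℝ (Fin n)} (hx : x ∈ U) :
    Lap (fun y => c * f y) x = c * Lap f x := by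
  rw [lap_eq_pd, lap_eq_pd, Finset.mul_sum]
  refine Finset.sum_congr rfl fun i _ => ?_
  have hstep : pd i (fun y => c * f y) =ᶠ[nhds x] fun y => c * pd i f y := by
    filter_upwards [hU.mem_nhds hx] with y hy
    exact pd_const_mul (diffAt_of_contDiffOn hU hf (by norm_num) hy) c i
  rw [pd_congr_nhds i hstep]
  exact pd_const_mul (diffAt_of_contDiffOn hU (contDiffOn_pd hU hf le_rfl i) le_rfl hx) c i


/- ### rp arithmetic -/

lemma rp_sub_one {y : EuclideanSpace ℝ (Fin n)} (hy : y ≠ 0) (a : ℝ) :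
    rp (a - 1) y = rp a y * (qq y)⁻¹ := by
  rw [rp, rp, Real.rpow_sub (qq_pos hy), Real.rpow_one, div_eq_mul_inv]

lemma rp_sub_two {y : EuclideanSpace ℝ (Fin n)} (hy : y ≠ 0) (a : ℝ) :
    rp (a - 2) y = rp a y * ((qq y)⁻¹)^2 := by
  have h1 : a - 2 = a - 1 - 1 := by ring
  rw [h1, rp_sub_one hy, rp_sub_one hy]
  ring

/- ### step A : first derivative of the Kelvin-type function -/

lemma pd_kelvin_fst {U : Set (EuclideanSpace ℝ (Fin n))} (hU : IsOpen U)
    {v : EuclideanSpace ℝ (Fin n) → ℝ} (hv : ContDiffOn ℝ 2 v U) (a : ℝ)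
    {y : EuclideanSpace ℝ (Fin n)} (hy : y ≠ 0) (hyU : iv y ∈ U) (i : Fin n) :
    pd i (fun z => rp a z * v (iv z)) y =
      2*a*(rp (a-1) y * (y i * v (iv y))) + rp (a-1) y * (fderiv ℝ v (iv y) (ee n i))
      - 2 * (rp (a-2) y * (y i * (fderiv ℝ v (iv y) y))) := by
  have hv_at : DifferentiableAt ℝ v (iv y) := diffAt_of_contDiffOn hU hv (by norm_num) hyU
  have h2 : HasFDerivAt (fun z => v (iv z)) ((fderiv ℝ v (iv y)).comp (Sm y)) y :=
    (hv_at.hasFDerivAt).comp y (hasFDerivAt_iv hy)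
  have h3 := (hasFDerivAt_rp hy a).fun_mul h2
  rw [pd_of_hasFDerivAt i h3]
  simp only [ContinuousLinearMap.add_apply, ContinuousLinearMap.coe_smul', Pi.smul_apply,
    ContinuousLinearMap.coe_comp', Function.comp_apply, innerSL_apply_apply, smul_eq_mul]
  rw [clm_Sm, inner_ee, rp_sub_one hy, rp_sub_two hy]
  ring


lemma clm_Sm2 (M : EuclideanSpace ℝ (Fin n) →L[ℝ] (EuclideanSpace ℝ (Fin n) →L[ℝ] ℝ))
    (x v w : EuclideanSpace ℝ (Fin n)) :
    M (Sm x v) w = (qq x)⁻¹ * M v w - 2 * ((qq x)⁻¹)^2 * ⟪x, v⟫ * M x w := by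
  rw [Sm_apply, map_sub, map_smul, map_smul]
  simp [smul_eq_mul]

/-- open set where everything lives -/
lemma isOpen_goodset {U : Set (EuclideanSpace ℝ (Fin n))} (hU : IsOpen U) :
    IsOpen {y : EuclideanSpace ℝ (Fin n) | y ≠ 0 ∧ iv y ∈ U} := by
  have hiv : ContinuousOn (iv (n := n)) {y | y ≠ 0} := by
    apply ContinuousOn.fun_smul
    · exact (contDiff_qq.continuous.continuousOn).inv₀ fun y hy => qq_ne hy
    · exact continuousOn_id
  have h0 : IsOpen {y : EuclideanSpace ℝ (Fin n) | y ≠ 0} := isOpen_ne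
  have := hiv.isOpen_inter_preimage h0 hU
  exact this

set_option maxHeartbeats 2000000 in
/-- ### The master formula : Laplacian of `rp a * (v ∘ iv)`. -/
lemma lapG {U : Set (EuclideanSpace ℝ (Fin n))} (hU : IsOpen U)
    {v : EuclideanSpace ℝ (Fin n) → ℝ} (hv : ContDiffOn ℝ 2 v U) (a : ℝ)
    {x : EuclideanSpace ℝ (Fin n)} (hx : x ≠ 0) (hxU : iv x ∈ U) :
    Lap (fun y => rp a y * v (iv y)) x =
      (2*a*(2*a+n-2)) * (rp (a-1) x * v (iv x))
      - (4*a+2*(n:ℝ)-4) * (rp (a-2) x * fderiv ℝ v (iv x) x)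
      + rp (a-2) x * Lap v (iv x) := by
  classical
  set W : Set (EuclideanSpace ℝ (Fin n)) := {y | y ≠ 0 ∧ iv y ∈ U} with hW
  have hWopen : IsOpen W := isOpen_goodset hU
  have hxW : x ∈ W := ⟨hx, hxU⟩
  -- abbreviations
  set D1 : EuclideanSpace ℝ (Fin n) →L[ℝ] ℝ := fderiv ℝ v (iv x) with hD1
  set D2 : EuclideanSpace ℝ (Fin n) →L[ℝ] (EuclideanSpace ℝ (Fin n) →L[ℝ] ℝ) :=
    fderiv ℝ (fderiv ℝ v) (iv x) with hD2
  set Q : ℝ := qq x with hQdef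
  have hQ : Q ≠ 0 := qq_ne hx
  set r1 : ℝ := rp (a-1) x with hr1def
  set r2 : ℝ := rp (a-2) x with hr2def
  set r3 : ℝ := rp (a-3) x with hr3def
  set V : ℝ := v (iv x) with hV
  set d2 : ℝ := D1 x with hd2
  set Bxx : ℝ := D2 x x with hBxx
  set LV : ℝ := Lap v (iv x) with hLV
  -- differentiability facts at x
  have hvd : DifferentiableAt ℝ v (iv x) := diffAt_of_contDiffOn hU hv (by norm_num) hxU
  have hdf : DifferentiableAt ℝ (fderiv ℝ v) (iv x) := by
    have h2 : ContDiffOn ℝ 1 (fderiv ℝ v) U := hv.fderiv_of_isOpen hU (by norm_num)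
    exact diffAt_of_contDiffOn hU h2 le_rfl hxU
  have Hiv := hasFDerivAt_iv hx
  have Hviv : HasFDerivAt (fun y => v (iv y)) (D1.comp (Sm x)) x :=
    hvd.hasFDerivAt.comp x Hiv
  have Hc : HasFDerivAt (fun y => fderiv ℝ v (iv y)) (D2.comp (Sm x)) x :=
    hdf.hasFDerivAt.comp x Hiv
  have Hdv1 : ∀ i : Fin n, HasFDerivAt (fun y => fderiv ℝ v (iv y) (ee n i))
      (((fderiv ℝ v (iv x)).comp ((0 : EuclideanSpace ℝ (Fin n) →L[ℝ]
        EuclideanSpace ℝ (Fin n)))) + (D2.comp (Sm x)).flip (ee n i)) x := by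
    intro i
    exact Hc.clm_apply (hasFDerivAt_const (ee n i) x)
  have Hdv2 : HasFDerivAt (fun y => fderiv ℝ v (iv y) y)
      ((fderiv ℝ v (iv x)).comp (ContinuousLinearMap.id ℝ _) + (D2.comp (Sm x)).flip x) x :=
    Hc.clm_apply (hasFDerivAt_id x)
  have Hrp1 := hasFDerivAt_rp hx (a-1)
  have Hrp2 := hasFDerivAt_rp hx (a-2)
  -- the first-derivative functions
  set G : Fin n → EuclideanSpace ℝ (Fin n) → ℝ := fun i y =>
    2*a*(rp (a-1) y * (y i * v (iv y))) + rp (a-1) y * (fderiv ℝ v (iv y) (ee n i))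
      - 2 * (rp (a-2) y * (y i * (fderiv ℝ v (iv y) y))) with hG
  have HG : ∀ i : Fin n, HasFDerivAt (G i) _ x := fun i =>
    (((Hrp1.mul ((hasFDerivAt_coord x i).fun_mul Hviv)).const_mul (2*a)).add
      (Hrp1.mul (Hdv1 i))).sub
      ((Hrp2.mul ((hasFDerivAt_coord x i).fun_mul Hdv2)).const_mul 2)
  -- canonical coefficients
  set A : ℝ := 4*a*(a-1)*r2*V - 4*a*r1*((Q⁻¹)^2)*d2 - 4*(a-2)*r3*d2 + 4*r2*((Q⁻¹)^2)*Bxx with hA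
  set C : ℝ := 2*a*r1*V - 2*r2*d2 with hC
  set Dc : ℝ := 2*a*r1*Q⁻¹ + 2*(a-1)*r2 - 2*r2 with hDc
  set Hc' : ℝ := r1*Q⁻¹ with hHc
  set Ic : ℝ := -2*r1*((Q⁻¹)^2) with hIc
  set Jc : ℝ := -2*r2*Q⁻¹ with hJc
  have key : ∀ i : Fin n, pd i (pd i (fun y => rp a y * v (iv y))) x
      = A*(x i*x i) + C + Dc*(x i * D1 (ee n i)) + Hc'*(D2 (ee n i) (ee n i))
        + Ic*(x i * D2 x (ee n i)) + Jc*(x i * D2 (ee n i) x) := by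
    intro i
    have hstep : pd i (fun y => rp a y * v (iv y)) =ᶠ[nhds x] G i := by
      filter_upwards [hWopen.mem_nhds hxW] with y hy
      exact pd_kelvin_fst hU hv a hy.1 hy.2 i
    rw [pd_congr_nhds i hstep, pd_of_hasFDerivAt i (HG i)]
    simp only [ContinuousLinearMap.add_apply, ContinuousLinearMap.sub_apply,
      ContinuousLinearMap.coe_smul', Pi.smul_apply, ContinuousLinearMap.smul_apply,
      ContinuousLinearMap.coe_comp', Function.comp_apply, ContinuousLinearMap.flip_apply,
      ContinuousLinearMap.zero_apply, map_zero, ContinuousLinearMap.coe_id', id_eq,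
      innerSL_apply_apply, smul_eq_mul, ContinuousLinearMap.comp_apply]
    rw [clm_Sm, clm_Sm2, clm_Sm2]
    simp only [inner_ee, proj_ee, if_pos rfl]
    have e1 : rp (a-1-1) x = r2 := by rw [hr2def]; congr 1; ring
    have e2 : rp (a-2-1) x = r3 := by rw [hr3def]; congr 1; ring
    rw [e1, e2]
    simp only [← hQdef, ← hD1, ← hD2, ← hV, ← hd2, ← hBxx, ← hr1def, ← hr2def, ← hr3def,
      eq_self_iff_true, if_true]
    rw [hA, hC, hDc, hHc, hIc, hJc]
    ring
  -- sum up
  have hLap : Lap (fun y => rp a y * v (iv y)) x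
      = A*Q + (n:ℝ)*C + Dc*d2 + Hc'*LV + Ic*Bxx + Jc*Bxx := by
    rw [lap_eq_pd]
    have : ∀ i ∈ Finset.univ, pd i (pd i (fun y => rp a y * v (iv y))) x
      = A*(x i*x i) + C + Dc*(x i * D1 (ee n i)) + Hc'*(D2 (ee n i) (ee n i))
        + Ic*(x i * D2 x (ee n i)) + Jc*(x i * D2 (ee n i) x) := fun i _ => key i
    rw [Finset.sum_congr rfl this]
    simp only [Finset.sum_add_distrib, ← Finset.mul_sum, Finset.sum_const,
      Finset.card_univ, Fintype.card_fin, nsmul_eq_mul]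
    have s1 : ∑ i, x i * x i = Q := sum_sq_eq_qq x
    have s2 : ∑ i, x i * D1 (ee n i) = d2 := (clm_decomp x D1).symm
    have s3 : ∑ i, D2 (ee n i) (ee n i) = LV := by
      rw [hLV, lap_eq_pd]
      refine Finset.sum_congr rfl fun i _ => ?_
      rw [pd_pd_eq hU hv hxU i i]
    have s4 : ∑ i, x i * D2 x (ee n i) = Bxx := (clm_decomp x (D2 x)).symm
    have s5 : ∑ i, x i * D2 (ee n i) x = Bxx := by
      have := (clm_decomp x (D2.flip x)).symm
      simpa only [ContinuousLinearMap.flip_apply] using this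
    rw [s1, s2, s3, s4, s5]
  rw [hLap]
  -- final algebra
  have hrel1 : r2 = r1 * Q⁻¹ := by
    have h := rp_sub_one (n := n) hx (a-1)
    rw [show a-1-1 = a-2 by ring] at h
    rw [hr2def, hr1def, hQdef]
    exact h
  have hrel3 : r3 = r2 * Q⁻¹ := by
    have h := rp_sub_one (n := n) hx (a-2)
    rw [show a-2-1 = a-3 by ring] at h
    rw [hr3def, hr2def, hQdef]
    exact h
  rw [hA, hC, hDc, hHc, hIc, hJc, hrel3, hrel1]
  field_simp
  ring


/- ### the Euler operator `pf w = ⟨x, ∇w⟩` -/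

def pf (w : EuclideanSpace ℝ (Fin n) → ℝ) : EuclideanSpace ℝ (Fin n) → ℝ :=
  fun y => fderiv ℝ w y y

lemma contDiffOn_pf {w : EuclideanSpace ℝ (Fin n) → ℝ} {U : Set (EuclideanSpace ℝ (Fin n))}
    {m k : ℕ} (hU : IsOpen U) (hw : ContDiffOn ℝ m w U) (h : k + 1 ≤ m) :
    ContDiffOn ℝ k (pf w) U := by
  have h2 : ContDiffOn ℝ k (fderiv ℝ w) U := by
    apply hw.fderiv_of_isOpen hU
    exact_mod_cast h
  exact h2.clm_apply contDiffOn_id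

lemma contDiffOn_lap {w : EuclideanSpace ℝ (Fin n) → ℝ} {U : Set (EuclideanSpace ℝ (Fin n))}
    {m k : ℕ} (hU : IsOpen U) (hw : ContDiffOn ℝ m w U) (h : k + 2 ≤ m) :
    ContDiffOn ℝ k (Lap w) U := by
  have : ∀ i : Fin n, ContDiffOn ℝ k (pd i (pd i w)) U := by
    intro i
    refine contDiffOn_pd hU (contDiffOn_pd hU hw ?_ i) le_rfl i
    omega
  exact ContDiffOn.sum fun i _ => this i

lemma pd_sum {f : Fin n → EuclideanSpace ℝ (Fin n) → ℝ} {x : EuclideanSpace ℝ (Fin n)}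
    (hf : ∀ j, DifferentiableAt ℝ (f j) x) (i : Fin n) :
    pd i (fun y => ∑ j, f j y) x = ∑ j, pd i (f j) x := by
  have H : HasFDerivAt (fun y => ∑ j, f j y) (∑ j, fderiv ℝ (f j) x) x :=
    HasFDerivAt.fun_sum fun j _ => (hf j).hasFDerivAt
  rw [pd_of_hasFDerivAt i H, ContinuousLinearMap.sum_apply]
  rfl

lemma lap_sum {f : Fin n → EuclideanSpace ℝ (Fin n) → ℝ} {U : Set (EuclideanSpace ℝ (Fin n))}
    (hU : IsOpen U) (hf : ∀ j, ContDiffOn ℝ 2 (f j) U) {x : EuclideanSpace ℝ (Fin n)}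
    (hx : x ∈ U) :
    Lap (fun y => ∑ j, f j y) x = ∑ j, Lap (f j) x := by
  rw [lap_eq_pd]
  have step : ∀ i : Fin n, pd i (pd i (fun y => ∑ j, f j y)) x = ∑ j, pd i (pd i (f j)) x := by
    intro i
    have hstep : pd i (fun y => ∑ j, f j y) =ᶠ[nhds x] fun y => ∑ j, pd i (f j) y := by
      filter_upwards [hU.mem_nhds hx] with y hy
      exact pd_sum (fun j => diffAt_of_contDiffOn hU (hf j) (by norm_num) hy) i
    rw [pd_congr_nhds i hstep]
    exact pd_sum (fun j => diffAt_of_contDiffOn hU (contDiffOn_pd hU (hf j) le_rfl i) le_rfl hx) i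
  rw [Finset.sum_congr rfl fun i _ => step i, Finset.sum_comm]
  exact Finset.sum_congr rfl fun j _ => (lap_eq_pd (f j) x).symm

lemma lap_coord_mul {g : EuclideanSpace ℝ (Fin n) → ℝ} {U : Set (EuclideanSpace ℝ (Fin n))}
    (hU : IsOpen U) (hg : ContDiffOn ℝ 2 g U) {x : EuclideanSpace ℝ (Fin n)} (hx : x ∈ U)
    (j : Fin n) :
    Lap (fun y => y j * g y) x = x j * Lap g x + 2 * pd j g x := by
  rw [lap_eq_pd]
  have key : ∀ i : Fin n, pd i (pd i (fun y => y j * g y)) x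
      = 2 * ((ee n i) j * pd i g x) + x j * pd i (pd i g) x := by
    intro i
    have hstep : pd i (fun y => y j * g y) =ᶠ[nhds x]
        fun y => (ee n i) j * g y + y j * pd i g y := by
      filter_upwards [hU.mem_nhds hx] with y hy
      have hgy : DifferentiableAt ℝ g y := diffAt_of_contDiffOn hU hg (by norm_num) hy
      rw [pd_of_hasFDerivAt i ((hasFDerivAt_coord y j).fun_mul hgy.hasFDerivAt)]
      simp only [ContinuousLinearMap.add_apply, ContinuousLinearMap.coe_smul', Pi.smul_apply,
        smul_eq_mul]
      rw [show (PiLp.proj (𝕜 := ℝ) 2 (fun _ : Fin n => ℝ) j) (ee n i) = (ee n i) j from rfl]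
      rw [show (fderiv ℝ g y) (ee n i) = pd i g y from rfl]
      ring
    rw [pd_congr_nhds i hstep]
    have h1 : DifferentiableAt ℝ g x := diffAt_of_contDiffOn hU hg (by norm_num) hx
    have h2 : DifferentiableAt ℝ (pd i g) x :=
      diffAt_of_contDiffOn hU (contDiffOn_pd hU hg le_rfl i) le_rfl hx
    have h3 : DifferentiableAt ℝ (fun y : EuclideanSpace ℝ (Fin n) => y j * pd i g y) x :=
      ((hasFDerivAt_coord x j).differentiableAt).mul h2
    rw [pd_add (h1.const_mul _) h3, pd_const_mul h1 _ i,
      pd_of_hasFDerivAt i ((hasFDerivAt_coord x j).fun_mul h2.hasFDerivAt)]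
    simp only [ContinuousLinearMap.add_apply, ContinuousLinearMap.coe_smul', Pi.smul_apply,
      smul_eq_mul]
    rw [show (PiLp.proj (𝕜 := ℝ) 2 (fun _ : Fin n => ℝ) j) (ee n i) = (ee n i) j from rfl]
    rw [show (fderiv ℝ (pd i g) x) (ee n i) = pd i (pd i g) x from rfl]
    ring
  rw [Finset.sum_congr rfl fun i _ => key i]
  rw [Finset.sum_add_distrib, ← Finset.mul_sum, ← Finset.mul_sum]
  have hee : ∀ i : Fin n, (ee n i) j = if i = j then 1 else 0 := by
    intro i; simp [ee, EuclideanSpace.single_apply, eq_comm]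
  have h4 : ∑ i, (ee n i) j * pd i g x = pd j g x := by
    rw [Finset.sum_congr rfl fun i _ => by rw [hee i]]
    simp [Finset.sum_ite_eq']
  rw [h4, ← lap_eq_pd]
  ring

lemma lap_pd_comm {w : EuclideanSpace ℝ (Fin n) → ℝ} {U : Set (EuclideanSpace ℝ (Fin n))}
    (hU : IsOpen U) (hw : ContDiffOn ℝ 3 w U) {x : EuclideanSpace ℝ (Fin n)} (hx : x ∈ U)
    (j : Fin n) : Lap (pd j w) x = pd j (Lap w) x := by
  have hw2 : ContDiffOn ℝ 2 w U := hw.of_le (by norm_num)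
  have step : ∀ i : Fin n, pd i (pd i (pd j w)) x = pd j (pd i (pd i w)) x := by
    intro i
    have hstep : pd i (pd j w) =ᶠ[nhds x] pd j (pd i w) := by
      filter_upwards [hU.mem_nhds hx] with y hy
      exact pd_comm hU hw2 hy i j
    rw [pd_congr_nhds i hstep]
    exact pd_comm hU (contDiffOn_pd hU hw (by norm_num) i) hx i j
  rw [lap_eq_pd, Finset.sum_congr rfl fun i _ => step i]
  have : pd j (Lap w) x = pd j (fun y => ∑ i, pd i (pd i w) y) x := rfl
  rw [this, pd_sum fun i => diffAt_of_contDiffOn hU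
    (contDiffOn_pd hU (contDiffOn_pd hU hw (by norm_num) i) le_rfl i) le_rfl hx]

lemma pf_eq_sum (w : EuclideanSpace ℝ (Fin n) → ℝ) (y : EuclideanSpace ℝ (Fin n)) :
    pf w y = ∑ j, y j * pd j w y := clm_decomp y (fderiv ℝ w y)

lemma lap_pf {w : EuclideanSpace ℝ (Fin n) → ℝ} {U : Set (EuclideanSpace ℝ (Fin n))}
    (hU : IsOpen U) (hw : ContDiffOn ℝ 3 w U) {x : EuclideanSpace ℝ (Fin n)} (hx : x ∈ U) :
    Lap (pf w) x = pf (Lap w) x + 2 * Lap w x := by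
  have h0 : Lap (pf w) x = Lap (fun y => ∑ j, y j * pd j w y) x :=
    lap_congr_nhds (Filter.Eventually.of_forall fun y => pf_eq_sum w y)
  have hcd : ∀ j : Fin n, ContDiffOn ℝ 2 (fun y => y j * pd j w y) U := by
    intro j
    refine ContDiffOn.mul ?_ (contDiffOn_pd hU hw (by norm_num) j)
    exact ((PiLp.proj (𝕜 := ℝ) 2 (fun _ : Fin n => ℝ) j).contDiff.contDiffOn)
  rw [h0, lap_sum hU hcd hx]
  have step : ∀ j : Fin n, Lap (fun y => y j * pd j w y) x
      = x j * pd j (Lap w) x + 2 * pd j (pd j w) x := by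
    intro j
    rw [lap_coord_mul hU (contDiffOn_pd hU hw (by norm_num) j) hx j,
      lap_pd_comm hU hw hx j]
  rw [Finset.sum_congr rfl fun j _ => step j, Finset.sum_add_distrib, ← Finset.mul_sum]
  have h1 : pf (Lap w) x = ∑ j, x j * pd j (Lap w) x := pf_eq_sum (Lap w) x
  rw [← h1, ← lap_eq_pd]


/- ### smoothness of the Kelvin building blocks -/

lemma rp_norm (c : ℝ) (y : EuclideanSpace ℝ (Fin n)) : rp c y = ‖y‖ ^ (2*c) := by
  rw [rp, qq, ← Real.rpow_natCast ‖y‖ 2, ← Real.rpow_mul (norm_nonneg y)]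
  norm_num

lemma contDiffOn_rp (c : ℝ) (k : ℕ) :
    ContDiffOn ℝ k (rp (n := n) c) {y : EuclideanSpace ℝ (Fin n) | y ≠ 0} := by
  refine ContDiffOn.rpow_const_of_ne ?_ fun y hy => qq_ne hy
  exact (contDiff_qq (n := n)).contDiffOn.of_le (by exact_mod_cast le_top)

lemma contDiffOn_iv (k : ℕ) :
    ContDiffOn ℝ k (iv (n := n)) {y : EuclideanSpace ℝ (Fin n) | y ≠ 0} := by
  refine ContDiffOn.fun_smul ?_ contDiffOn_id
  exact ((contDiff_qq (n := n)).contDiffOn.of_le (by exact_mod_cast le_top)).inv fun y hy => qq_ne hy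

lemma contDiffOn_kelvin_term {U : Set (EuclideanSpace ℝ (Fin n))}
    {g : EuclideanSpace ℝ (Fin n) → ℝ} (hg : ContDiffOn ℝ 2 g U) (c : ℝ) :
    ContDiffOn ℝ 2 (fun y => rp c y * g (iv y)) {y : EuclideanSpace ℝ (Fin n) | y ≠ 0 ∧ iv y ∈ U} := by
  have hsub : {y : EuclideanSpace ℝ (Fin n) | y ≠ 0 ∧ iv y ∈ U}
      ⊆ {y : EuclideanSpace ℝ (Fin n) | y ≠ 0} := fun y hy => hy.1
  refine ContDiffOn.mul ((contDiffOn_rp c 2).mono hsub) ?_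
  refine hg.comp ((contDiffOn_iv 2).mono hsub) ?_
  exact fun y hy => hy.2

end KelvinAux

noncomputable section KelvinMain

variable {n : ℕ}

/-- the auxiliary first-Laplacian companion function -/
def MM (n : ℕ) (a : ℝ) (u : EuclideanSpace ℝ (Fin n) → ℝ) : EuclideanSpace ℝ (Fin n) → ℝ :=
  fun z => (2*a*(2*a+(n:ℝ)-2)) * u z + (-(4*a+2*(n:ℝ)-4)) * pf u z

/-- the transformation law of the bilaplacian under the Kelvin transform:
`Δ²(K u)(x) = |x|^{−n−4} (Δ²u)(x/|x|²) = |x|^{−8} K(Δ²u)(x)` on an open set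
`Ω ⊆ ℝⁿ \ {0}`, for `u` of class `C⁴` on the inverted set `Ω*`. -/
theorem stmt_2 (n : ℕ) (hn : 5 ≤ n) (Ω : Set (EuclideanSpace ℝ (Fin n)))
    (hΩ : IsOpen Ω) (hΩ0 : (0 : EuclideanSpace ℝ (Fin n)) ∉ Ω)
    (u : EuclideanSpace ℝ (Fin n) → ℝ)
    (hu : ContDiffOn ℝ 4 u ((fun x : EuclideanSpace ℝ (Fin n) => (‖x‖ ^ 2)⁻¹ • x) '' Ω)) :
    ∀ x ∈ Ω,
      BiLap (Kelvin u) x = ‖x‖ ^ (-(n : ℝ) - 4) * BiLap u ((‖x‖ ^ 2)⁻¹ • x) ∧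
      BiLap (Kelvin u) x = ‖x‖ ^ (-(8 : ℝ)) * Kelvin (BiLap u) x := by
  intro x hx
  have hx0 : x ≠ 0 := fun h => hΩ0 (h ▸ hx)
  set a : ℝ := ((4:ℝ) - n)/2 with ha
  set Os : Set (EuclideanSpace ℝ (Fin n)) :=
    (fun x : EuclideanSpace ℝ (Fin n) => (‖x‖ ^ 2)⁻¹ • x) '' Ω with hOs
  have hOs_eq : Os = {y : EuclideanSpace ℝ (Fin n) | y ≠ 0 ∧ iv y ∈ Ω} := by
    ext y; constructor
    · rintro ⟨z, hz, rfl⟩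
      have hz0 : z ≠ 0 := fun h => hΩ0 (h ▸ hz)
      refine ⟨iv_ne_zero hz0, ?_⟩
      show iv (iv z) ∈ Ω
      rw [iv_iv hz0]; exact hz
    · rintro ⟨hy0, hyiv⟩
      exact ⟨iv y, hyiv, iv_iv hy0⟩
  have hOsopen : IsOpen Os := by rw [hOs_eq]; exact isOpen_goodset hΩ
  have hxiv : iv x ∈ Os := ⟨x, hx, rfl⟩
  -- smoothness bookkeeping
  have hu' : ContDiffOn ℝ 4 u Os := hu
  have hu4 : ContDiffOn ℝ (4:ℕ) u Os := by exact_mod_cast hu'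
  have hu3 : ContDiffOn ℝ (3:ℕ) u Os := hu4.of_le (by exact_mod_cast (by norm_num : (3:ℕ) ≤ 4))
  have hu3' : ContDiffOn ℝ 3 u Os := by exact_mod_cast hu3
  have hu2 : ContDiffOn ℝ 2 u Os := by
    have : ContDiffOn ℝ (2:ℕ) u Os := hu4.of_le (by exact_mod_cast (by norm_num : (2:ℕ) ≤ 4))
    exact_mod_cast this
  have hpfu2 : ContDiffOn ℝ 2 (pf u) Os := by
    have : ContDiffOn ℝ (2:ℕ) (pf u) Os := contDiffOn_pf hOsopen hu4 (by omega)
    exact_mod_cast this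
  have hM2 : ContDiffOn ℝ 2 (MM n a u) Os :=
    (contDiffOn_const.mul hu2).add (contDiffOn_const.mul hpfu2)
  have hL2 : ContDiffOn ℝ 2 (Lap u) Os := by
    have : ContDiffOn ℝ (2:ℕ) (Lap u) Os := contDiffOn_lap hOsopen hu4 (by omega)
    exact_mod_cast this
  -- W0
  have hW0open : IsOpen {y : EuclideanSpace ℝ (Fin n) | y ≠ 0 ∧ iv y ∈ Os} := isOpen_goodset hOsopen
  have hxW0 : x ∈ {y : EuclideanSpace ℝ (Fin n) | y ≠ 0 ∧ iv y ∈ Os} := ⟨hx0, hxiv⟩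
  -- step 0 : Kelvin u = rp a * (u ∘ iv)
  have h2a : 2*a = (4:ℝ) - n := by rw [ha]; ring
  have hK : Kelvin u = fun y => rp a y * u (iv y) := by
    funext y
    show ‖y‖ ^ ((4:ℝ) - n) * u ((‖y‖^2)⁻¹ • y) = rp a y * u (iv y)
    rw [rp_norm a y, h2a]
    rfl
  -- the directional-derivative conversion
  have hmid : ∀ (g : EuclideanSpace ℝ (Fin n) → ℝ) (y : EuclideanSpace ℝ (Fin n)), y ≠ 0 →
      fderiv ℝ g (iv y) y = qq y * pf g (iv y) := by
    intro g y hy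
    have hyy : y = qq y • iv y := by
      rw [iv, smul_smul, mul_inv_cancel₀ (qq_ne hy), one_smul]
    have h1 : fderiv ℝ g (iv y) (qq y • iv y) = qq y * pf g (iv y) := by
      rw [map_smul]; simp [pf, smul_eq_mul]
    rw [← h1, ← hyy]
  -- step 1 : Lap F1 = F2 on W0
  have hLapF1W : ∀ y ∈ {y : EuclideanSpace ℝ (Fin n) | y ≠ 0 ∧ iv y ∈ Os},
      Lap (fun z => rp a z * u (iv z)) y
        = rp (a-1) y * MM n a u (iv y) + rp (a-2) y * Lap u (iv y) := by
    intro y hy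
    rw [lapG hOsopen hu2 a hy.1 hy.2, hmid u y hy.1]
    have h21 : rp (a-2) y * qq y = rp (a-1) y := by
      have h := rp_sub_one hy.1 (a-1)
      rw [show a-1-1 = a-2 by ring] at h
      rw [h, mul_assoc, inv_mul_cancel₀ (qq_ne hy.1), mul_one]
    show _ = rp (a-1) y * ((2*a*(2*a+(n:ℝ)-2)) * u (iv y) + (-(4*a+2*(n:ℝ)-4)) * pf u (iv y)) + _
    linear_combination (-(4*a+2*(n:ℝ)-4) * pf u (iv y)) * h21
  -- step 2 : BiLap (Kelvin u) x = Lap F2 x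
  have hbilap : BiLap (Kelvin u) x
      = Lap (fun y => rp (a-1) y * MM n a u (iv y) + rp (a-2) y * Lap u (iv y)) x := by
    show Lap (Lap (Kelvin u)) x = _
    rw [hK]
    refine lap_congr_nhds ?_
    filter_upwards [hW0open.mem_nhds hxW0] with y hy
    exact hLapF1W y hy
  -- step 3 : split
  have hT1 : ContDiffOn ℝ 2 (fun y => rp (a-1) y * MM n a u (iv y))
      {y : EuclideanSpace ℝ (Fin n) | y ≠ 0 ∧ iv y ∈ Os} := contDiffOn_kelvin_term hM2 (a-1)
  have hT2 : ContDiffOn ℝ 2 (fun y => rp (a-2) y * Lap u (iv y))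
      {y : EuclideanSpace ℝ (Fin n) | y ≠ 0 ∧ iv y ∈ Os} := contDiffOn_kelvin_term hL2 (a-2)
  have hsplit := lap_add hW0open hT1 hT2 hxW0
  -- step 4a : Lap T1
  have hlapT1 : Lap (fun y => rp (a-1) y * MM n a u (iv y)) x
      = rp (a-3) x * Lap (MM n a u) (iv x) := by
    have h := lapG hOsopen hM2 (a-1) hx0 hxiv
    rw [show a-1-1 = a-2 by ring, show a-1-2 = a-3 by ring] at h
    rw [h]
    have hz1 : 2*(a-1)*(2*(a-1)+(n:ℝ)-2) = 0 := by rw [ha]; ring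
    have hz2 : 4*(a-1)+2*(n:ℝ)-4 = 0 := by rw [ha]; ring
    rw [hz1, hz2]
    ring
  -- step 4b : Lap T2
  have hlapT2 : Lap (fun y => rp (a-2) y * Lap u (iv y)) x
      = 2*(n:ℝ) * (rp (a-3) x * Lap u (iv x)) + 4 * (rp (a-3) x * pf (Lap u) (iv x))
        + rp (a-4) x * BiLap u (iv x) := by
    have h := lapG hOsopen hL2 (a-2) hx0 hxiv
    rw [show a-2-1 = a-3 by ring, show a-2-2 = a-4 by ring] at h
    rw [h, hmid (Lap u) x hx0]
    have hz3 : 2*(a-2)*(2*(a-2)+(n:ℝ)-2) = 2*(n:ℝ) := by rw [ha]; ring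
    have hz4 : 4*(a-2)+2*(n:ℝ)-4 = -4 := by rw [ha]; ring
    have h43 : rp (a-4) x * qq x = rp (a-3) x := by
      have h' := rp_sub_one hx0 (a-3)
      rw [show a-3-1 = a-4 by ring] at h'
      rw [h', mul_assoc, inv_mul_cancel₀ (qq_ne hx0), mul_one]
    rw [hz3, hz4]
    show _ = _ + _ + rp (a-4) x * Lap (Lap u) (iv x)
    linear_combination (4 * pf (Lap u) (iv x)) * h43
  -- step 5 : Lap (MM n a u)
  have hlapM : Lap (MM n a u) (iv x)
      = (2*a*(2*a+(n:ℝ)-2)) * Lap u (iv x)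
        + (-(4*a+2*(n:ℝ)-4)) * (pf (Lap u) (iv x) + 2 * Lap u (iv x)) := by
    have h1 : ContDiffOn ℝ 2 (fun z => (2*a*(2*a+(n:ℝ)-2)) * u z) Os :=
      contDiffOn_const.mul hu2
    have h2 : ContDiffOn ℝ 2 (fun z => (-(4*a+2*(n:ℝ)-4)) * pf u z) Os :=
      contDiffOn_const.mul hpfu2
    have := lap_add hOsopen h1 h2 hxiv
    rw [show MM n a u = fun z => (2*a*(2*a+(n:ℝ)-2)) * u z + (-(4*a+2*(n:ℝ)-4)) * pf u z from rfl,
      this, lap_const_mul hOsopen hu2 _ hxiv, lap_const_mul hOsopen hpfu2 _ hxiv,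
      lap_pf hOsopen hu3' hxiv]
  -- put everything together
  have hmain : BiLap (Kelvin u) x = rp (a-4) x * BiLap u (iv x) := by
    rw [hbilap, hsplit, hlapT1, hlapT2, hlapM]
    have hc1 : 2*a*(2*a+(n:ℝ)-2) = 8 - 2*(n:ℝ) := by rw [ha]; ring
    have hc2 : -(4*a+2*(n:ℝ)-4) = -4 := by rw [ha]; ring
    rw [hc1, hc2]
    ring
  have hfin : rp (a-4) x = ‖x‖ ^ (-(n:ℝ) - 4) := by
    rw [rp_norm, show 2*(a-4) = -(n:ℝ)-4 by rw [ha]; ring]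
  constructor
  · rw [hmain, hfin]; rfl
  · rw [hmain, hfin]
    show _ = ‖x‖ ^ (-(8:ℝ)) * (‖x‖ ^ ((4:ℝ) - n) * BiLap u ((‖x‖^2)⁻¹ • x))
    rw [← mul_assoc, ← Real.rpow_add (norm_pos_iff.2 hx0),
      show (-(8:ℝ)) + ((4:ℝ) - n) = -(n:ℝ) - 4 by ring]
    rfl

end KelvinMain
end

section
/- Let n ≥ 5 be an integer and let v : ℝ → (0,∞) be a C⁴ function. Define u : ℝⁿ \ {0} → (0,∞) by u(x) = |x|^{(4−n)/2} v(−log|x|). Then for every x ∈ ℝⁿ \ {0}, Δ²u(x) − (n(n−4)(n²−4)/16) u(x)^{(n+4)/(n−4)} = |x|^{−(n+4)/2} · [ v⁗(t) − ((n(n−4)+8)/2) v″(t) + (n²(n−4)²/16) v(t) − (n(n²−4)(n−4)/16) v(t)^{(n+4)/(n−4)} ] evaluated at t = −log|x|. -/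
open scoped BigOperators

lemma hasFDerivAt_norm' {n : ℕ} (x : EuclideanSpace ℝ (Fin n)) (hx : x ≠ 0) :
    HasFDerivAt (fun y : EuclideanSpace ℝ (Fin n) => ‖y‖) (‖x‖⁻¹ • innerSL ℝ x) x := by
  have h0 : (0:ℝ) < ‖x‖ := norm_pos_iff.mpr hx
  have h1 : HasFDerivAt (fun y : EuclideanSpace ℝ (Fin n) => ‖y‖ ^ 2)
      ((2:ℕ) • innerSL ℝ x) x := (hasStrictFDerivAt_norm_sq x).hasFDerivAt
  have h2 : HasDerivAt Real.sqrt (1 / (2 * Real.sqrt (‖x‖ ^ 2))) (‖x‖ ^ 2) :=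
    Real.hasDerivAt_sqrt (by positivity)
  have h3 := h2.comp_hasFDerivAt x h1
  have he : (Real.sqrt ∘ fun y : EuclideanSpace ℝ (Fin n) => ‖y‖ ^ 2)
      = fun y : EuclideanSpace ℝ (Fin n) => ‖y‖ := by
    funext y; simp [Function.comp, Real.sqrt_sq (norm_nonneg y)]
  rw [he] at h3
  refine h3.congr_fderiv ?_
  rw [Real.sqrt_sq h0.le]
  ext w
  simp [smul_smul]
  ring

lemma lap_radial {n : ℕ} (F F1 : ℝ → ℝ) (F2x : ℝ) (x : EuclideanSpace ℝ (Fin n)) (hx : x ≠ 0)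
    (hF : ∀ r : ℝ, 0 < r → HasDerivAt F (F1 r) r)
    (hF1 : HasDerivAt F1 F2x ‖x‖) :
    Lap (fun y => F ‖y‖) x = F2x + ((n : ℝ) - 1) / ‖x‖ * F1 ‖x‖ := by
  have hr : (0:ℝ) < ‖x‖ := norm_pos_iff.mpr hx
  have hu : ∀ y : EuclideanSpace ℝ (Fin n), y ≠ 0 →
      HasFDerivAt (fun z : EuclideanSpace ℝ (Fin n) => F ‖z‖)
        ((F1 ‖y‖ * ‖y‖⁻¹) • innerSL ℝ y) y := by
    intro y hy
    have h := (hF ‖y‖ (norm_pos_iff.mpr hy)).comp_hasFDerivAt y (hasFDerivAt_norm' y hy)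
    rw [smul_smul] at h
    exact h
  set G : ℝ → ℝ := fun s => F1 s / s with hGdef
  have hG : HasDerivAt G ((F2x * ‖x‖ - F1 ‖x‖ * 1) / ‖x‖ ^ 2) ‖x‖ :=
    hF1.div (hasDerivAt_id ‖x‖) hr.ne'
  have hopen : {y : EuclideanSpace ℝ (Fin n) | y ≠ 0} ∈ nhds x :=
    (isOpen_compl_singleton).mem_nhds hx
  have key : ∀ i : Fin n,
      (fun y => fderiv ℝ (fun z : EuclideanSpace ℝ (Fin n) => F ‖z‖) y
          (EuclideanSpace.single i 1))
        =ᶠ[nhds x] (fun y => G ‖y‖ * y i) := by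
    intro i
    filter_upwards [hopen] with y hy
    rw [(hu y hy).fderiv]
    have hyr : (0:ℝ) < ‖y‖ := norm_pos_iff.mpr hy
    simp [hGdef, real_inner_comm, EuclideanSpace.inner_single_left]
    rw [EuclideanSpace.inner_single_right, div_eq_mul_inv]
    simp
  have hmul : ∀ i : Fin n,
      HasFDerivAt (fun y : EuclideanSpace ℝ (Fin n) => G ‖y‖ * y i)
        ((G ‖x‖) • (EuclideanSpace.proj i) +
          (x i) • (((F2x * ‖x‖ - F1 ‖x‖ * 1) / ‖x‖ ^ 2) • (‖x‖⁻¹ • innerSL ℝ x))) x := by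
    intro i
    have hGc : HasFDerivAt (fun y : EuclideanSpace ℝ (Fin n) => G ‖y‖)
        (((F2x * ‖x‖ - F1 ‖x‖ * 1) / ‖x‖ ^ 2) • (‖x‖⁻¹ • innerSL ℝ x)) x := by
      have := hG.comp_hasFDerivAt x (hasFDerivAt_norm' x hx)
      exact this
    have hproj : HasFDerivAt (fun y : EuclideanSpace ℝ (Fin n) => y i)
        (EuclideanSpace.proj (𝕜 := ℝ) i) x := (EuclideanSpace.proj (𝕜 := ℝ) i).hasFDerivAt
    exact hGc.mul hproj
  unfold Lap
  have hterm : ∀ i : Fin n,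
      fderiv ℝ (fun y => fderiv ℝ (fun z : EuclideanSpace ℝ (Fin n) => F ‖z‖) y
          (EuclideanSpace.single i 1)) x (EuclideanSpace.single i 1)
        = G ‖x‖ + ((F2x * ‖x‖ - F1 ‖x‖ * 1) / ‖x‖ ^ 2) * ‖x‖⁻¹ * (x i * x i) := by
    intro i
    rw [(key i).fderiv_eq, (hmul i).fderiv]
    simp [EuclideanSpace.inner_single_right, real_inner_comm, EuclideanSpace.inner_single_left]
    ring
  rw [Finset.sum_congr rfl (fun i _ => hterm i)]
  rw [Finset.sum_add_distrib, Finset.sum_const, ← Finset.mul_sum]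
  have hsum : ∑ i : Fin n, x i * x i = ‖x‖ ^ 2 := by
    rw [EuclideanSpace.norm_eq, Real.sq_sqrt (by positivity)]
    congr 1; funext i; rw [Real.norm_eq_abs, sq_abs, sq]
  rw [hsum]
  simp only [Finset.card_fin, nsmul_eq_mul]
  simp only [hGdef]
  field_simp
  ring

lemma EF_hasDerivAt (β : ℝ) (g g1 : ℝ → ℝ) (hg : ∀ t, HasDerivAt g (g1 t) t)
    (r : ℝ) (hr : 0 < r) :
    HasDerivAt (fun s : ℝ => s ^ β * g (-Real.log s))
      (r ^ (β - 1) * (β * g (-Real.log r) - g1 (-Real.log r))) r := by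
  have h1 : HasDerivAt (fun s : ℝ => s ^ β) (β * r ^ (β - 1)) r :=
    Real.hasDerivAt_rpow_const (Or.inl hr.ne')
  have h2 : HasDerivAt (fun s : ℝ => g (-Real.log s)) (g1 (-Real.log r) * -r⁻¹) r := by
    have hl : HasDerivAt (fun s : ℝ => -Real.log s) (-r⁻¹) r :=
      (Real.hasDerivAt_log hr.ne').neg
    exact (hg (-Real.log r)).comp r hl
  have h3 := h1.mul h2
  refine h3.congr_deriv ?_
  have hpow : r ^ β * r⁻¹ = r ^ (β - 1) := by
    rw [Real.rpow_sub hr, Real.rpow_one, div_eq_mul_inv]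
  rw [← hpow]
  ring

lemma lap_EF {n : ℕ} (β : ℝ) (g g1 g2 : ℝ → ℝ)
    (hg : ∀ t, HasDerivAt g (g1 t) t) (hg1 : ∀ t, HasDerivAt g1 (g2 t) t)
    (x : EuclideanSpace ℝ (Fin n)) (hx : x ≠ 0) :
    Lap (fun y => ‖y‖ ^ β * g (-Real.log ‖y‖)) x
      = ‖x‖ ^ (β - 2) * (g2 (-Real.log ‖x‖)
          - (2 * β + (n : ℝ) - 2) * g1 (-Real.log ‖x‖)
          + β * (β + (n : ℝ) - 2) * g (-Real.log ‖x‖)) := by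
  have hr : (0:ℝ) < ‖x‖ := norm_pos_iff.mpr hx
  set t := -Real.log ‖x‖ with ht
  have hF1 : HasDerivAt (fun s : ℝ => s ^ (β - 1) * ((fun u => β * g u - g1 u) (-Real.log s)))
      (‖x‖ ^ (β - 1 - 1) * ((β - 1) * (β * g t - g1 t) - (β * g1 t - g2 t))) ‖x‖ :=
    EF_hasDerivAt (β - 1) (fun u => β * g u - g1 u) (fun u => β * g1 u - g2 u)
      (fun u => ((hg u).const_mul β).sub (hg1 u)) ‖x‖ hr
  have heq : Lap (fun y => ‖y‖ ^ β * g (-Real.log ‖y‖)) x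
      = (‖x‖ ^ (β - 1 - 1) * ((β - 1) * (β * g t - g1 t) - (β * g1 t - g2 t)))
        + ((n : ℝ) - 1) / ‖x‖ * (‖x‖ ^ (β - 1) * (β * g t - g1 t)) := by
    exact lap_radial (fun s => s ^ β * g (-Real.log s))
      (fun s => s ^ (β - 1) * (β * g (-Real.log s) - g1 (-Real.log s)))
      _ x hx (fun r hr' => EF_hasDerivAt β g g1 hg r hr') (by simpa using hF1)
  rw [heq]
  have h1 : ‖x‖ ^ (β - 1 - 1) = ‖x‖ ^ (β - 2) := by ring_nf
  have h2 : ‖x‖ ^ (β - 1) = ‖x‖ ^ (β - 2) * ‖x‖ := by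
    rw [← Real.rpow_add_one hr.ne' (β - 2)]; ring_nf
  rw [h1, h2]
  field_simp
  ring

lemma lap_congr {n : ℕ} {f g : EuclideanSpace ℝ (Fin n) → ℝ} {x : EuclideanSpace ℝ (Fin n)}
    (h : f =ᶠ[nhds x] g) : Lap f x = Lap g x := by
  unfold Lap
  refine Finset.sum_congr rfl fun i _ => ?_
  have h1 : fderiv ℝ f =ᶠ[nhds x] fderiv ℝ g := h.fderiv
  have h2 : (fun y => fderiv ℝ f y (EuclideanSpace.single i 1))
      =ᶠ[nhds x] (fun y => fderiv ℝ g y (EuclideanSpace.single i 1)) :=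
    h1.mono fun y hy => by simp only [hy]
  rw [h2.fderiv_eq]

/-- the Emden–Fowler change of coordinates conjugates the constant
Q-curvature operator to the Delaunay ODE operator. -/
theorem stmt_4 (n : ℕ) (hn : 5 ≤ n) (v : ℝ → ℝ) (hv : ContDiff ℝ 4 v)
    (hvpos : ∀ t, 0 < v t) :
    ∀ x : EuclideanSpace ℝ (Fin n), x ≠ 0 →
      BiLap (fun y => ‖y‖ ^ (((4 : ℝ) - n) / 2) * v (-Real.log ‖y‖)) x -
          (n * (n - 4) * (n ^ 2 - 4) / 16 : ℝ) *
            (‖x‖ ^ (((4 : ℝ) - n) / 2) * v (-Real.log ‖x‖)) ^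
              (((n : ℝ) + 4) / ((n : ℝ) - 4)) =
        ‖x‖ ^ (-((n : ℝ) + 4) / 2) *
          (iteratedDeriv 4 v (-Real.log ‖x‖) -
            ((n * (n - 4) + 8) / 2 : ℝ) * iteratedDeriv 2 v (-Real.log ‖x‖) +
            (n ^ 2 * (n - 4) ^ 2 / 16 : ℝ) * v (-Real.log ‖x‖) -
            (n * (n ^ 2 - 4) * (n - 4) / 16 : ℝ) *
              v (-Real.log ‖x‖) ^ (((n : ℝ) + 4) / ((n : ℝ) - 4))) := by
  intro x hx
  have hr : (0:ℝ) < ‖x‖ := norm_pos_iff.mpr hx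
  have hn5 : (5:ℝ) ≤ (n:ℝ) := by exact_mod_cast hn
  have hn4 : (n:ℝ) - 4 ≠ 0 := by linarith
  -- derivatives of v
  have hc4 : ContDiff ℝ ((3:WithTop ℕ∞) + 1) v := by
    convert hv using 2
    norm_num
  have hdv : Differentiable ℝ v := (contDiff_succ_iff_deriv.mp hc4).1
  have hc3 : ContDiff ℝ ((2:WithTop ℕ∞) + 1) (deriv v) := by
    have := (contDiff_succ_iff_deriv.mp hc4).2.2
    rw [show (2:WithTop ℕ∞) + 1 = 3 by norm_num]
    exact this
  have hdv1 : Differentiable ℝ (deriv v) := (contDiff_succ_iff_deriv.mp hc3).1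
  have hc2 : ContDiff ℝ ((1:WithTop ℕ∞) + 1) (deriv (deriv v)) := by
    have := (contDiff_succ_iff_deriv.mp hc3).2.2
    rw [show (1:WithTop ℕ∞) + 1 = 2 by norm_num]
    exact this
  have hdv2 : Differentiable ℝ (deriv (deriv v)) := (contDiff_succ_iff_deriv.mp hc2).1
  have hdv3 : Differentiable ℝ (deriv (deriv (deriv v))) := by
    have := (contDiff_succ_iff_deriv.mp hc2).2.2
    exact (contDiff_one_iff_deriv.mp this).1
  set v1 := deriv v with hv1
  set v2 := deriv v1 with hv2
  set v3 := deriv v2 with hv3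
  set v4 := deriv v3 with hv4
  have Hv : ∀ t, HasDerivAt v (v1 t) t := fun t => (hdv t).hasDerivAt
  have Hv1 : ∀ t, HasDerivAt v1 (v2 t) t := fun t => (hdv1 t).hasDerivAt
  have Hv2 : ∀ t, HasDerivAt v2 (v3 t) t := fun t => (hdv2 t).hasDerivAt
  have Hv3 : ∀ t, HasDerivAt v3 (v4 t) t := fun t => (hdv3 t).hasDerivAt
  set a : ℝ := ((4:ℝ) - n) / 2 with ha
  set t := -Real.log ‖x‖ with ht
  -- the function w after one Laplacian
  set c1 : ℝ := 2 * a + (n:ℝ) - 2 with hc1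
  set c0 : ℝ := a * (a + (n:ℝ) - 2) with hc0
  set w : ℝ → ℝ := fun s => v2 s - c1 * v1 s + c0 * v s with hw
  set w1 : ℝ → ℝ := fun s => v3 s - c1 * v2 s + c0 * v1 s with hw1
  set w2 : ℝ → ℝ := fun s => v4 s - c1 * v3 s + c0 * v2 s with hw2
  have Hw : ∀ s, HasDerivAt w (w1 s) s := fun s =>
    (((Hv2 s).sub ((Hv1 s).const_mul c1)).add ((Hv s).const_mul c0))
  have Hw1 : ∀ s, HasDerivAt w1 (w2 s) s := fun s =>
    (((Hv3 s).sub ((Hv2 s).const_mul c1)).add ((Hv1 s).const_mul c0))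
  -- first Laplacian
  have hev : Lap (fun y => ‖y‖ ^ a * v (-Real.log ‖y‖))
      =ᶠ[nhds x] (fun y => ‖y‖ ^ (a - 2) * w (-Real.log ‖y‖)) := by
    have hopen : {y : EuclideanSpace ℝ (Fin n) | y ≠ 0} ∈ nhds x :=
      (isOpen_compl_singleton).mem_nhds hx
    filter_upwards [hopen] with y hy
    rw [lap_EF a v v1 v2 Hv Hv1 y hy]
  -- second Laplacian
  have hbl : BiLap (fun y => ‖y‖ ^ a * v (-Real.log ‖y‖)) x
      = ‖x‖ ^ (a - 2 - 2) * (w2 t - (2 * (a - 2) + (n:ℝ) - 2) * w1 t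
          + (a - 2) * ((a - 2) + (n:ℝ) - 2) * w t) := by
    show Lap (Lap (fun y => ‖y‖ ^ a * v (-Real.log ‖y‖))) x = _
    rw [lap_congr hev]
    exact lap_EF (a - 2) w w1 w2 Hw Hw1 x hx
  -- nonlinear term
  have hnl : (‖x‖ ^ a * v t) ^ (((n : ℝ) + 4) / ((n : ℝ) - 4))
      = ‖x‖ ^ (a - 2 - 2) * v t ^ (((n : ℝ) + 4) / ((n : ℝ) - 4)) := by
    rw [Real.mul_rpow (Real.rpow_nonneg (norm_nonneg x) a) (hvpos t).le]
    congr 1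
    rw [← Real.rpow_mul (norm_nonneg x)]
    congr 1
    rw [ha]
    field_simp
    ring
  -- iterated derivatives
  have hit2 : iteratedDeriv 2 v = v2 := by
    rw [hv2, hv1]
    rw [show (2:ℕ) = 1 + 1 from rfl, iteratedDeriv_succ, iteratedDeriv_one]
  have hit4 : iteratedDeriv 4 v = v4 := by
    rw [hv4, hv3, hv2, hv1]
    rw [show (4:ℕ) = 3 + 1 from rfl, iteratedDeriv_succ,
      show (3:ℕ) = 2 + 1 from rfl, iteratedDeriv_succ,
      show (2:ℕ) = 1 + 1 from rfl, iteratedDeriv_succ, iteratedDeriv_one]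
  have hexp : -((n:ℝ) + 4) / 2 = a - 2 - 2 := by rw [ha]; ring
  rw [hbl, hnl, hexp, hit4, hit2]
  set R := ‖x‖ ^ (a - 2 - 2) with hR
  set P := v t ^ (((n:ℝ) + 4) / ((n:ℝ) - 4)) with hP
  simp only [hw, hw1, hw2, hc1, hc0, ha]
  ring
end

section
/- Let n ≥ 5 be an integer and M > 0, and let v : ℝ → ℝ be a C² function with |v(t)| ≤ M, |v′(t)| ≤ M and |v″(t)| ≤ M for all t ∈ ℝ. For t ∈ ℝ, θ in the unit sphere S^{n−1} ⊂ ℝⁿ, and a ∈ ℝⁿ with θ ≠ e^{−t}a, define v_a(t,θ) = |θ − e^{−t} a|^{(4−n)/2} · v( t + log|θ − e^{−t} a| ). Then there exists a constant C > 0, depending only on n and M, such that whenever e^{−t}|a| ≤ 1/2 one has | v_a(t,θ) − v(t) − e^{−t} ⟨θ, a⟩ ( ((n−4)/2) v(t) − v′(t) ) | ≤ C |a|² e^{−2t}. -/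
open Set

/-- MVT bound on a convex set. -/
private lemma mvt_abs {f f' : ℝ → ℝ} {s : Set ℝ} (hs : Convex ℝ s) {C : ℝ}
    (h1 : ∀ x ∈ s, HasDerivAt f (f' x) x) (hC : ∀ x ∈ s, |f' x| ≤ C)
    {x y : ℝ} (hx : x ∈ s) (hy : y ∈ s) : |f y - f x| ≤ C * |y - x| :=
  hs.norm_image_sub_le_of_norm_hasDerivWithin_le
    (fun z hz => (h1 z hz).hasDerivWithinAt) hC hx hy

private lemma abs_sub_le_uIcc {a b x : ℝ} (h : x ∈ Set.uIcc a b) : |x - a| ≤ |b - a| := by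
  rcases le_total a b with hab | hab
  · rw [Set.uIcc_of_le hab] at h
    rw [abs_of_nonneg (by linarith [h.1]), abs_of_nonneg (by linarith)]
    linarith [h.2]
  · rw [Set.uIcc_of_ge hab] at h
    rw [abs_of_nonpos (by linarith [h.2]), abs_of_nonpos (by linarith)]
    linarith [h.1]

/-- Second-order Taylor bound via two applications of MVT. -/
private lemma taylor2 {f f' f'' : ℝ → ℝ} {K u : ℝ} (hu : |u| ≤ 1)
    (h1 : ∀ x ∈ Set.Icc (-1:ℝ) 1, HasDerivAt f (f' x) x)
    (h2 : ∀ x ∈ Set.Icc (-1:ℝ) 1, HasDerivAt f' (f'' x) x)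
    (hK : ∀ x ∈ Set.Icc (-1:ℝ) 1, |f'' x| ≤ K) :
    |f u - f 0 - u * f' 0| ≤ K * u ^ 2 := by
  have hsub : Set.uIcc (0:ℝ) u ⊆ Set.Icc (-1) 1 := by
    apply Set.uIcc_subset_Icc ⟨by norm_num, by norm_num⟩
    constructor <;> [linarith [neg_abs_le u]; linarith [le_abs_self u]]
  -- step A : on uIcc 0 u, |f' x - f' 0| ≤ K * |u|
  have hA : ∀ x ∈ Set.uIcc (0:ℝ) u, |f' x - f' 0| ≤ K * |u| := by
    intro x hx
    have := mvt_abs (convex_Icc (-1:ℝ) 1) h2 hK (by norm_num : (0:ℝ) ∈ Set.Icc (-1:ℝ) 1)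
      (hsub hx)
    calc |f' x - f' 0| ≤ K * |x - 0| := this
      _ ≤ K * |u| := by
          have hx0 : |x - 0| ≤ |u - 0| := abs_sub_le_uIcc hx
          simp only [sub_zero] at hx0
          have hK0 : 0 ≤ K := le_trans (abs_nonneg _) (hK 0 (by norm_num))
          rw [sub_zero]
          exact mul_le_mul_of_nonneg_left hx0 hK0
  -- step B : apply MVT to h x = f x - x * f' 0
  have hB := mvt_abs (convex_uIcc (0:ℝ) u)
    (f := fun x => f x - x * f' 0) (f' := fun x => f' x - f' 0)
    (fun x hx => by exact (h1 x (hsub hx)).sub (hasDerivAt_mul_const (f' 0)))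
    (C := K * |u|) hA Set.left_mem_uIcc Set.right_mem_uIcc
  simp only [zero_mul, sub_zero] at hB
  calc |f u - f 0 - u * f' 0| = |f u - u * f' 0 - f 0| := by ring_nf
    _ ≤ K * |u| * |u| := hB
    _ = K * u ^ 2 := by rw [mul_assoc, ← abs_mul, abs_of_nonneg (mul_self_nonneg u)]; ring



private lemma log_est1 {r : ℝ} (h1 : 1/2 ≤ r) (h2 : r ≤ 3/2) :
    |Real.log r| ≤ 2 * |r - 1| := by
  have hinv2 : ∀ x ∈ Set.Icc (1/2:ℝ) (3/2), |x⁻¹| ≤ 2 := by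
    intro x hx
    have hxp : (0:ℝ) < x := by linarith [hx.1]
    have hxi : x * x⁻¹ = 1 := mul_inv_cancel₀ hxp.ne'
    have hip : (0:ℝ) < x⁻¹ := inv_pos.mpr hxp
    rw [abs_of_pos hip]; nlinarith [hx.1]
  have hlogd : ∀ x ∈ Set.Icc (1/2:ℝ) (3/2), HasDerivAt Real.log x⁻¹ x :=
    fun x hx => Real.hasDerivAt_log (by linarith [hx.1])
  have h := mvt_abs (convex_Icc (1/2:ℝ) (3/2)) hlogd hinv2
    (Set.mem_Icc.mpr ⟨by norm_num, by norm_num⟩ : (1:ℝ) ∈ Set.Icc (1/2:ℝ) (3/2))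
    (Set.mem_Icc.mpr ⟨h1, h2⟩)
  rwa [Real.log_one, sub_zero] at h

private lemma log_est2 {r : ℝ} (h1 : 1/2 ≤ r) (h2 : r ≤ 3/2) :
    |Real.log r - (r - 1)| ≤ 2 * |r - 1| * |r - 1| := by
  have hIccsub : Set.uIcc (1:ℝ) r ⊆ Set.Icc (1/2 : ℝ) (3/2) :=
    Set.uIcc_subset_Icc ⟨by norm_num, by norm_num⟩ ⟨h1, h2⟩
  have hder : ∀ x ∈ Set.uIcc (1:ℝ) r,
      HasDerivAt (fun x => Real.log x - (x - 1)) (x⁻¹ - 1) x := by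
    intro x hx
    have hxp : (0:ℝ) < x := by linarith [(hIccsub hx).1]
    exact (Real.hasDerivAt_log hxp.ne').sub
      (by simpa using (hasDerivAt_id x).sub_const 1)
  have hbd : ∀ x ∈ Set.uIcc (1:ℝ) r, |x⁻¹ - 1| ≤ 2 * |r - 1| := by
    intro x hx
    have hxp : (0:ℝ) < x := by linarith [(hIccsub hx).1]
    have heq : x⁻¹ - 1 = (1 - x) * x⁻¹ := by field_simp
    have h2' : |x⁻¹| ≤ 2 := by
      have hip : (0:ℝ) < x⁻¹ := inv_pos.mpr hxp
      have hxi : x * x⁻¹ = 1 := mul_inv_cancel₀ hxp.ne'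
      rw [abs_of_pos hip]; nlinarith [(hIccsub hx).1]
    have h1' : |1 - x| ≤ |r - 1| := by
      rw [abs_sub_comm]; exact abs_sub_le_uIcc hx
    rw [heq, abs_mul]
    calc |1-x| * |x⁻¹| ≤ |r-1| * 2 :=
          mul_le_mul h1' h2' (abs_nonneg _) (abs_nonneg _)
      _ = 2 * |r-1| := by ring
  have h := mvt_abs (convex_uIcc (1:ℝ) r) hder hbd
    Set.left_mem_uIcc Set.right_mem_uIcc
  simp only [Real.log_one, sub_self, sub_zero, zero_sub] at h
  calc |Real.log r - (r-1)| = |(Real.log r - (r - 1)) - (Real.log 1 - (1 - 1))| := by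
        rw [Real.log_one]; ring_nf
    _ ≤ 2 * |r-1| * |r - 1| := by
        rw [Real.log_one]
        simpa using h

/-- Taylor bound for the profile `u ↦ exp(p u) v(t+u)`. -/
private lemma profile_taylor (p M B : ℝ) (hM : 0 < M) (hpB : |p| ≤ B) (hB : 0 ≤ B)
    (v : ℝ → ℝ) (hv : ContDiff ℝ 2 v)
    (hv0 : ∀ s : ℝ, |v s| ≤ M) (hv1 : ∀ s : ℝ, |deriv v s| ≤ M)
    (hv2 : ∀ s : ℝ, |iteratedDeriv 2 v s| ≤ M)
    (t u : ℝ) (hu : |u| ≤ 1) :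
    |Real.exp (p*u) * v (t+u) - v t - u * (p * v t + deriv v t)| ≤
      Real.exp B * M * (B+1)^2 * u^2 := by
  have hvd : Differentiable ℝ v := hv.differentiable (by norm_num)
  have hv2' : ContDiff ℝ 1 (deriv v) := by
    have h2 : ContDiff ℝ ((1:WithTop ℕ∞) + 1) v := by
      rw [show ((1:WithTop ℕ∞) + 1) = 2 by norm_num]; exact hv
    exact (contDiff_succ_iff_deriv.mp h2).2.2
  have hdvd : Differentiable ℝ (deriv v) := hv2'.differentiable one_ne_zero
  have hdd2 : iteratedDeriv 2 v = deriv (deriv v) := by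
    rw [show (2:ℕ) = 1+1 from rfl, iteratedDeriv_succ, iteratedDeriv_one]
  have hexp : ∀ x : ℝ, HasDerivAt (fun w => Real.exp (p*w)) (Real.exp (p*x) * p) x := by
    intro x
    simpa using ((hasDerivAt_id x).const_mul p).exp
  have hvcomp : ∀ x : ℝ, HasDerivAt (fun w => v (t+w)) (deriv v (t+x)) x := by
    intro x
    exact ((hvd (t+x)).hasDerivAt.comp x ((hasDerivAt_id x).const_add t)).congr_deriv (by simp)
  have hdvcomp : ∀ x : ℝ, HasDerivAt (fun w => deriv v (t+w)) (deriv (deriv v) (t+x)) x := by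
    intro x
    exact ((hdvd (t+x)).hasDerivAt.comp x ((hasDerivAt_id x).const_add t)).congr_deriv (by simp)
  have hg1 : ∀ x : ℝ, HasDerivAt (fun w => Real.exp (p*w) * v (t+w))
      (p * (Real.exp (p*x) * v (t+x)) + Real.exp (p*x) * deriv v (t+x)) x := by
    intro x
    have h := (hexp x).mul (hvcomp x)
    refine h.congr_deriv ?_
    ring
  have hg2 : ∀ x : ℝ, HasDerivAt
      (fun w => p * (Real.exp (p*w) * v (t+w)) + Real.exp (p*w) * deriv v (t+w))
      (p^2 * Real.exp (p*x) * v (t+x) + 2*p*(Real.exp (p*x) * deriv v (t+x))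
        + Real.exp (p*x) * iteratedDeriv 2 v (t+x)) x := by
    intro x
    have h1 := ((hexp x).mul (hvcomp x)).const_mul p
    have h2 := (hexp x).mul (hdvcomp x)
    have h := h1.add h2
    refine h.congr_deriv ?_
    rw [hdd2]; ring
  have hKbd : ∀ x ∈ Set.Icc (-1:ℝ) 1,
      |p^2 * Real.exp (p*x) * v (t+x) + 2*p*(Real.exp (p*x) * deriv v (t+x))
        + Real.exp (p*x) * iteratedDeriv 2 v (t+x)| ≤ Real.exp B * M * (B+1)^2 := by
    intro x hx
    have hxab : |x| ≤ 1 := abs_le.mpr ⟨hx.1, hx.2⟩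
    have hex : Real.exp (p*x) ≤ Real.exp B := by
      apply Real.exp_le_exp.mpr
      have h1 : p * x ≤ |p * x| := le_abs_self _
      have h2 : |p*x| ≤ B := by
        rw [abs_mul]
        calc |p| * |x| ≤ B * 1 :=
              mul_le_mul hpB hxab (abs_nonneg _) hB
          _ = B := mul_one _
      linarith
    have hex0 : (0:ℝ) < Real.exp (p*x) := Real.exp_pos _
    have hpn : p^2 ≤ B^2 := by nlinarith [sq_abs p, abs_nonneg p]
    have bX : |p^2 * Real.exp (p*x) * v (t+x)| ≤ B^2 * Real.exp B * M := by
      rw [abs_mul, abs_mul, abs_of_nonneg (sq_nonneg p), abs_of_pos hex0]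
      gcongr <;> first | exact hpn | exact hex | exact hv0 _
    have bY : |2*p*(Real.exp (p*x) * deriv v (t+x))| ≤ 2*B*(Real.exp B * M) := by
      rw [abs_mul, abs_mul, abs_mul, abs_of_pos hex0]
      rw [show |(2:ℝ)| = 2 by norm_num]
      gcongr <;> first | exact hpB | exact hex | exact hv1 _
    have bZ : |Real.exp (p*x) * iteratedDeriv 2 v (t+x)| ≤ Real.exp B * M := by
      rw [abs_mul, abs_of_pos hex0]
      gcongr <;> first | exact hex | exact hv2 _
    have habs := abs_add_le (p^2 * Real.exp (p*x) * v (t+x)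
        + 2*p*(Real.exp (p*x) * deriv v (t+x))) (Real.exp (p*x) * iteratedDeriv 2 v (t+x))
    have habs2 := abs_add_le (p^2 * Real.exp (p*x) * v (t+x))
        (2*p*(Real.exp (p*x) * deriv v (t+x)))
    nlinarith [habs, habs2, bX, bY, bZ]
  have hTay := taylor2 hu (fun x _ => hg1 x) (fun x _ => hg2 x) hKbd
  simpa using hTay


set_option maxHeartbeats 1000000 in
private lemma scalar_core (n : ℕ) (hn : 5 ≤ n) (M : ℝ) (hM : 0 < M)
    (v : ℝ → ℝ) (hv : ContDiff ℝ 2 v)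
    (hv0 : ∀ s : ℝ, |v s| ≤ M) (hv1 : ∀ s : ℝ, |deriv v s| ≤ M)
    (hv2 : ∀ s : ℝ, |iteratedDeriv 2 v s| ≤ M)
    (t r q s : ℝ)
    (hr_lb : 1/2 ≤ r) (hr_ub : r ≤ 3/2) (hr1 : |r - 1| ≤ s) (hqs : |q| ≤ s)
    (hs2 : s ≤ 1/2) (hsq : r^2 = 1 - 2*q + s^2) :
    |r ^ (((4:ℝ) - n)/2) * v (t + Real.log r) - v t - q * (((n:ℝ)-4)/2 * v t - deriv v t)| ≤
      (4 * (Real.exp n * M * ((n:ℝ)+1)^2) + 4 * ((n:ℝ)+1) * M) * s^2 := by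
  have hn5 : (5:ℝ) ≤ n := by exact_mod_cast hn
  have hs0 : 0 ≤ s := le_trans (abs_nonneg _) hqs
  set p : ℝ := ((4:ℝ) - n)/2 with hp_def
  have hp_neg : p ≤ 0 := by rw [hp_def]; linarith
  have hp_abs : |p| ≤ n := by rw [abs_of_nonpos hp_neg, hp_def]; linarith
  set K : ℝ := Real.exp n * M * ((n:ℝ)+1)^2 with hK_def
  have hKpos : 0 < K := by positivity
  have hr0 : (0:ℝ) < r := by linarith
  have hkey : |r - 1 + q| ≤ 2 * s^2 := by
    have hid : (r+1) * (r - 1 + q) = s^2 + (r-1)*q := by linear_combination hsq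
    have h1 : |r - 1 + q| ≤ (r+1) * |r - 1 + q| :=
      le_mul_of_one_le_left (abs_nonneg _) (by linarith)
    have h2 : (r+1) * |r - 1 + q| = |s^2 + (r-1)*q| := by
      rw [← abs_of_pos (show (0:ℝ) < r+1 by linarith), ← abs_mul, hid]
    have h3 : |(r-1)*q| ≤ s * s := by
      rw [abs_mul]
      exact mul_le_mul hr1 hqs (abs_nonneg _) hs0
    have h4 : |s^2 + (r-1)*q| ≤ s^2 + s*s := by
      refine (abs_add_le _ _).trans ?_
      rw [abs_of_nonneg (sq_nonneg _)]
      linarith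
    nlinarith [h1, h2.le, h3, h4]
  set L := Real.log r with hL_def
  have hL1 : |L| ≤ 2 * |r - 1| := log_est1 hr_lb hr_ub
  have hL2 : |L - (r - 1)| ≤ 2 * |r-1| * |r-1| := log_est2 hr_lb hr_ub
  have hL_le : |L| ≤ 2 * s := by
    calc |L| ≤ 2 * |r-1| := hL1
      _ ≤ 2 * s := by linarith
  have hL_small : |L| ≤ 1 := by linarith
  have hLkey : |L + q| ≤ 4 * s^2 := by
    have heq : L + q = (L - (r-1)) + (r - 1 + q) := by ring
    rw [heq]
    refine (abs_add_le _ _).trans ?_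
    have h2' : 2 * |r-1| * |r-1| ≤ 2 * s^2 := by
      nlinarith [abs_nonneg (r-1), hr1]
    linarith [hL2, hkey]
  have hTay := profile_taylor p M n hM hp_abs (by positivity) v hv hv0 hv1 hv2 t L hL_small
  have hD : |p * v t + deriv v t| ≤ ((n:ℝ)+1) * M := by
    calc |p * v t + deriv v t| ≤ |p * v t| + |deriv v t| := abs_add_le _ _
      _ ≤ (n:ℝ) * M + M := by
          rw [abs_mul]
          have := mul_le_mul hp_abs (hv0 t) (abs_nonneg _) (by positivity)
          linarith [hv1 t]
      _ = ((n:ℝ)+1) * M := by ring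
  have hgL : r ^ p * v (t + L) = Real.exp (p*L) * v (t + L) := by
    rw [hL_def, Real.rpow_def_of_pos hr0, mul_comm (Real.log r) p]
  have main : r ^ p * v (t + L) - v t - q*(((n:ℝ)-4)/2 * v t - deriv v t)
      = (Real.exp (p*L) * v (t+L) - v t - L * (p * v t + deriv v t))
        + (L + q) * (p * v t + deriv v t) := by
    rw [hgL, hp_def]; ring
  rw [main]
  calc |(Real.exp (p*L) * v (t+L) - v t - L * (p * v t + deriv v t))
        + (L + q) * (p * v t + deriv v t)|
      ≤ |Real.exp (p*L) * v (t+L) - v t - L * (p * v t + deriv v t)|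
        + |(L + q) * (p * v t + deriv v t)| := abs_add_le _ _
    _ ≤ K * L^2 + 4*s^2 * (((n:ℝ)+1) * M) := by
        have h2 : |(L + q) * (p * v t + deriv v t)| ≤ 4*s^2 * (((n:ℝ)+1) * M) := by
          rw [abs_mul]
          exact mul_le_mul hLkey hD (abs_nonneg _) (by positivity)
        have h1 : |Real.exp (p*L) * v (t+L) - v t - L * (p * v t + deriv v t)| ≤ K * L^2 := by
          rw [hK_def]; exact hTay
        linarith
    _ ≤ K * (4*s^2) + 4*s^2 * (((n:ℝ)+1) * M) := by
        have hLsq : L^2 ≤ 4*s^2 := by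
          nlinarith [hL_le, abs_nonneg L, sq_abs L]
        nlinarith [hKpos]
    _ = (4 * K + 4 * ((n:ℝ)+1) * M) * s^2 := by ring

/-- first-order Taylor expansion, with quadratic error, of the translated
Emden–Fowler profile `v_a(t,θ) = |θ − e^{−t}a|^{(4−n)/2} v(t + log|θ − e^{−t}a|)`:
there is a constant `C > 0` depending only on `n` and `M` such that
`|v_a(t,θ) − v(t) − e^{−t}⟨θ,a⟩(((n−4)/2)v(t) − v′(t))| ≤ C|a|²e^{−2t}`
whenever `e^{−t}|a| ≤ 1/2`, for any `C²` function `v` with `|v|, |v′|, |v″| ≤ M`. -/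
theorem stmt_17 (n : ℕ) (hn : 5 ≤ n) (M : ℝ) (hM : 0 < M) :
    ∃ C : ℝ, 0 < C ∧
      ∀ v : ℝ → ℝ, ContDiff ℝ 2 v →
        (∀ t : ℝ, |v t| ≤ M) → (∀ t : ℝ, |deriv v t| ≤ M) →
        (∀ t : ℝ, |iteratedDeriv 2 v t| ≤ M) →
        ∀ (t : ℝ) (θ a : EuclideanSpace ℝ (Fin n)),
          ‖θ‖ = 1 → θ ≠ Real.exp (-t) • a → Real.exp (-t) * ‖a‖ ≤ 1 / 2 →
          |‖θ - Real.exp (-t) • a‖ ^ (((4 : ℝ) - n) / 2) *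
              v (t + Real.log ‖θ - Real.exp (-t) • a‖) -
            v t -
            Real.exp (-t) * (inner ℝ θ a : ℝ) *
              (((n : ℝ) - 4) / 2 * v t - deriv v t)| ≤
          C * ‖a‖ ^ 2 * Real.exp (-2 * t) := by
  refine ⟨4 * (Real.exp n * M * ((n:ℝ)+1)^2) + 4 * ((n:ℝ)+1) * M, by positivity, ?_⟩
  intro v hv hv0 hv1 hv2 t θ a hθ hne hsmall
  set ε := Real.exp (-t) with hε_def
  have hε : 0 < ε := Real.exp_pos _
  set r := ‖θ - ε • a‖ with hr_def
  have hr0 : 0 < r := by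
    rw [hr_def]; exact norm_pos_iff.mpr (sub_ne_zero.mpr hne)
  set c : ℝ := (inner ℝ θ a : ℝ) with hc_def
  have hca : |c| ≤ ‖a‖ := by
    have h := abs_real_inner_le_norm θ a
    rw [hθ, one_mul] at h; exact h
  have hεa : ‖ε • a‖ = ε * ‖a‖ := by
    rw [norm_smul, Real.norm_eq_abs, abs_of_pos hε]
  have hr1 : |r - 1| ≤ ε * ‖a‖ := by
    have h := abs_norm_sub_norm_le (θ - ε • a) θ
    rw [sub_sub_cancel_left, norm_neg, hθ, hεa] at h
    exact h
  have hr_lb : 1/2 ≤ r := by linarith [(abs_le.mp hr1).1]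
  have hr_ub : r ≤ 3/2 := by linarith [(abs_le.mp hr1).2]
  have hsq : r^2 = 1 - 2*(ε*c) + (ε*‖a‖)^2 := by
    have h := norm_sub_sq_real θ (ε • a)
    rw [hθ, hεa, real_inner_smul_right] at h
    rw [hr_def, h, ← hc_def]; norm_num
  have hqs : |ε * c| ≤ ε * ‖a‖ := by
    rw [abs_mul, abs_of_pos hε]
    exact mul_le_mul_of_nonneg_left hca hε.le
  have hcore := scalar_core n hn M hM v hv hv0 hv1 hv2 t r (ε*c) (ε*‖a‖)
    hr_lb hr_ub hr1 hqs hsmall hsq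
  have hε2 : (ε*‖a‖)^2 = ‖a‖^2 * Real.exp (-2*t) := by
    rw [hε_def, mul_pow, sq (Real.exp (-t)), ← Real.exp_add]
    ring_nf
  rw [hε2] at hcore
  calc |r ^ (((4:ℝ) - n)/2) * v (t + Real.log r) - v t -
        ε * c * (((n:ℝ)-4)/2 * v t - deriv v t)|
      ≤ (4 * (Real.exp n * M * ((n:ℝ)+1)^2) + 4 * ((n:ℝ)+1) * M) *
          (‖a‖^2 * Real.exp (-2*t)) := hcore
    _ = (4 * (Real.exp n * M * ((n:ℝ)+1)^2) + 4 * ((n:ℝ)+1) * M) * ‖a‖ ^ 2 *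
          Real.exp (-2*t) := by ring
end
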